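/- Let h, H : ℝ → ℝ with h(t) = a t² for some a > 0, and H differentiable, strictly convex with H(0) = 0, H'(0) = 0, H ≥ 0. Set g = h + H. Then 4·h(1)·g(1) < (g'(1))². -/
import Mathlib

theorem stmt_5 (a : ℝ) (ha : 0 < a) (h H g : ℝ → ℝ)
    (hh : h = fun t => a * t ^ 2)
    (hHd : Differentiable ℝ H) (hHsc : StrictConvexOn ℝ Set.univ H)
    (hH0 : H 0 = 0) (hH'0 : deriv H 0 = 0) (hHnn : ∀ t : ℝ, 0 ≤ H t)
    (hg : g = fun t => h t + H t) :
    4 * h 1 * g 1 < (deriv g 1) ^ 2 := by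
  have h01 : (0:ℝ) < 1 := one_pos
  have hs1 : slope H 0 1 = H 1 := by simp [slope_def_field, hH0]
  have h1 : H 1 < deriv H 1 := by
    have := hHsc.slope_lt_deriv (Set.mem_univ 0) (Set.mem_univ 1) h01 (hHd 1)
    rwa [hs1] at this
  have h2 : 0 < H 1 := by
    have := hHsc.deriv_lt_slope (Set.mem_univ 0) (Set.mem_univ 1) h01 (hHd 0)
    rwa [hs1, hH'0] at this
  have hderiv : deriv g 1 = 2 * a + deriv H 1 := by
    have hhd : HasDerivAt h (2 * a) 1 := by
      subst hh
      simpa [mul_comm] using ((hasDerivAt_pow 2 (1:ℝ)).const_mul a)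
    have : HasDerivAt g (2 * a + deriv H 1) 1 := by
      subst hg
      exact hhd.add (hHd 1).hasDerivAt
    exact this.deriv
  subst hh hg
  simp only [hderiv, one_pow, mul_one]
  nlinarith [h1, h2, ha, sq_nonneg (deriv H 1)]
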